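/- Let Q : ℤ × ℝ → ℝ be differentiable in t with Q(n)/Q(n−1) > 0 for all n, suppose Q satisfies ∂_t Q(n) = Q(n+1) − 2Q(n) − Q(n)²R(n) with R(n) = −1/Q(n−1), and define q(n) = ln(Q(n)/Q(n−1)). Then q satisfies the Volterra lattice equation ∂_t q(n) = e^{q(n+1)} − e^{q(n−1)} for all n ∈ ℤ. -/

import Mathlib

/-- The one-field reduction `R(n+1) = -1/Q(n)` of the first refined Ragnisco-Tu
flow yields the Volterra lattice equation for `q(n) = ln(Q(n)/Q(n-1))`. -/
theorem ragnisco_tu_reduces_to_volterra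
    (Q : ℤ → ℝ → ℝ)
    (hpos : ∀ n t, Q n t / Q (n - 1) t > 0)
    (hflow : ∀ n t, HasDerivAt (Q n)
      (Q (n + 1) t - 2 * Q n t - (Q n t) ^ 2 * (-1 / Q (n - 1) t)) t) :
    let q : ℤ → ℝ → ℝ := fun n t => Real.log (Q n t / Q (n - 1) t)
    ∀ n t, HasDerivAt (q n) (Real.exp (q (n + 1) t) - Real.exp (q (n - 1) t)) t := by
  have hne : ∀ n t, Q n t ≠ 0 := by
    intro n t h0
    have h := hpos (n + 1) t
    simp only [add_sub_cancel_right] at h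
    rw [h0, div_zero] at h
    exact lt_irrefl 0 h
  intro q n t
  have hQn := (hflow n t).log (hne n t)
  have hQm := (hflow (n - 1) t).log (hne (n - 1) t)
  have key := hQn.sub hQm
  simp only [show n - 1 + 1 = n from by ring] at key
  have hq : q n = fun s => Real.log (Q n s) - Real.log (Q (n - 1) s) := by
    funext s
    exact Real.log_div (hne n s) (hne (n - 1) s)
  rw [hq]
  convert key using 1
  case e'_4 => rfl
  case e'_5 => rfl
  case e'_8 => rfl
  have e1 : Real.exp (q (n + 1) t) = Q (n + 1) t / Q n t := by
    show Real.exp (Real.log (Q (n + 1) t / Q (n + 1 - 1) t)) = _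
    rw [add_sub_cancel_right]
    exact Real.exp_log (by simpa using hpos (n + 1) t)
  have e2 : Real.exp (q (n - 1) t) = Q (n - 1) t / Q (n - 1 - 1) t :=
    Real.exp_log (hpos (n - 1) t)
  rw [e1, e2]
  have h0 := hne n t
  have h1 := hne (n - 1) t
  have h2 := hne (n - 1 - 1) t
  field_simp
  ring
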